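/- Let O be a linear order and for each i in O let M_i be a countable relational structure linearly ordered by <. If each M_i has the Ramsey property, then U_{i in O}(M_i) has the Ramsey property. -/

import Mathlib

open FirstOrder FirstOrder.Language FirstOrder.Language.Structure CategoryTheory

namespace SRPaper

/-- Two tuples from `M` have the same complete quantifier-free type:
they satisfy the same quantifier-free formulas. -/
def SameQfTp (L : Language) (M : Type*) [L.Structure M] {n : ℕ} (a b : Fin n → M) : Prop :=
  ∀ φ : L.Formula (Fin n), φ.IsQF → (φ.Realize a ↔ φ.Realize b)

/-- A map is quantifier-free-type-preserving if tuples with the same complete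
quantifier-free type are sent to tuples with the same complete quantifier-free type. -/
def QfTpPreserving (LA : Language) (A : Type*) [LA.Structure A]
    (LB : Language) (B : Type*) [LB.Structure B] (h : A → B) : Prop :=
  ∀ (n : ℕ) (a b : Fin n → A), SameQfTp LA A a b → SameQfTp LB B (h ∘ a) (h ∘ b)

/-- `g : A → B` and `f : B → A` witness that `A` is a semi-retraction of `B`. -/
def SemiRetractionWitness (LA : Language) (A : Type*) [LA.Structure A]
    (LB : Language) (B : Type*) [LB.Structure B] (g : A → B) (f : B → A) : Prop :=
  Function.Injective g ∧ Function.Injective f ∧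
    QfTpPreserving LA A LB B g ∧ QfTpPreserving LB B LA A f ∧
    ∀ (n : ℕ) (φ : LA.Formula (Fin n)), φ.IsQF →
      ∀ s : Fin n → A, φ.Realize s → φ.Realize (f ∘ g ∘ s)

/-- `A` is a semi-retraction of `B`. -/
def IsSemiRetractionOf (LA : Language) (A : Type*) [LA.Structure A]
    (LB : Language) (B : Type*) [LB.Structure B] : Prop :=
  ∃ (g : A → B) (f : B → A), SemiRetractionWitness LA A LB B g f

/-- The Ramsey property for a class of structures `K`: for all `A B ∈ K` and `k ≥ 1` there is
`C ∈ K` such that every `k`-coloring of substructures of `C` admits a copy `B'` of `B` in `C`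
on which the color of copies of `A` is constant. -/
def RamseyClass (L : Language) (K : Set (Bundled L.Structure)) : Prop :=
  ∀ A B : Bundled L.Structure, A ∈ K → B ∈ K → ∀ k : ℕ, 1 ≤ k →
    ∃ C : Bundled L.Structure, C ∈ K ∧
      ∀ c : L.Substructure C → Fin k,
        ∃ B' : L.Substructure C, Nonempty (B ≃[L] B') ∧
          ∀ A₁ A₂ : L.Substructure C, A₁ ≤ B' → A₂ ≤ B' →
            Nonempty (A ≃[L] A₁) → Nonempty (A ≃[L] A₂) → c A₁ = c A₂

/-- A countable structure has the Ramsey property if its age does. -/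
def HasRP (L : Language) (M : Type*) [L.Structure M] : Prop :=
  RamseyClass L (L.age M)

/-- `(a i : i ∈ I)` is an `I`-indexed indiscernible set of `d`-tuples in `U`. -/
def IndexedIndiscernible (L' : Language) (I : Type*) [L'.Structure I]
    (L : Language) (U : Type*) [L.Structure U] (d : ℕ) (a : I → Fin d → U) : Prop :=
  ∀ (n : ℕ) (ι κ : Fin n → I), SameQfTp L' I ι κ →
    ∀ φ : L.Formula (Fin n × Fin d),
      (φ.Realize fun p => a (ι p.1) p.2) ↔ (φ.Realize fun p => a (κ p.1) p.2)

/-- `Y` realizes the EM-type of `X`: any formula satisfied by all `X`-tuples whose index tuple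
has a given complete quantifier-free type in `I` is satisfied by the corresponding `Y`-tuple. -/
def LocallyBased (L' : Language) (I : Type*) [L'.Structure I]
    (L : Language) (U : Type*) [L.Structure U] (d : ℕ) (X Y : I → Fin d → U) : Prop :=
  ∀ (n : ℕ) (φ : L.Formula (Fin n × Fin d)) (ι : Fin n → I),
    (∀ κ : Fin n → I, SameQfTp L' I ι κ → φ.Realize fun p => X (κ p.1) p.2) →
    (φ.Realize fun p => Y (ι p.1) p.2)

/-- `U` realizes every finitely-satisfiable set of formulas in one free variable with
countably many parameters: "sufficient saturation" for countable index structures. -/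
def AlephOneSaturated (L : Language) (U : Type*) [L.Structure U] : Prop :=
  ∀ (p : ℕ → U) (Φ : Set (L.Formula (ℕ ⊕ Fin 1))),
    (∀ Φ₀ : Finset (L.Formula (ℕ ⊕ Fin 1)), ↑Φ₀ ⊆ Φ →
      ∃ x : U, ∀ φ ∈ Φ₀, Formula.Realize φ (Sum.elim p fun _ => x)) →
    ∃ x : U, ∀ φ ∈ Φ, Formula.Realize φ (Sum.elim p fun _ => x)

/-- `I`-indexed indiscernible sets have the modeling property: in any sufficiently saturated
structure `U`, any `I`-indexed set of same-length tuples admits an `I`-indexed indiscernible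
set in `U` locally based on it. -/
def ModelingProperty (L' : Language) (I : Type*) [L'.Structure I] : Prop :=
  ∀ (L : FirstOrder.Language.{0, 0}) (U : Type) [L.Structure U], AlephOneSaturated L U →
    ∀ (d : ℕ) (X : I → Fin d → U),
      ∃ Y : I → Fin d → U,
        IndexedIndiscernible L' I L U d Y ∧ LocallyBased L' I L U d X Y

end SRPaper

namespace SRPaper

/-! ### Disjoint unions and semi-direct product structures

An "ordered `L`-structure" is modelled as a type with an `L.Structure` instance (for the
relations other than `<`) together with a `LinearOrder` instance (interpreting `<`); its full
language is `L.sum Language.order`. -/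

attribute [local instance] FirstOrder.Language.orderStructure

/-- Relation symbols `E`: a single binary symbol. -/
inductive EqSymb : ℕ → Type
  | E : EqSymb 2

/-- The language `{E}` with one binary relation. -/
def langE : Language := ⟨fun _ => Empty, EqSymb⟩

/-- Unary predicate symbols `P i` for `i : O`. -/
inductive PredSymb (O : Type) : ℕ → Type
  | P (i : O) : PredSymb O 1

/-- The language `{P_i : i ∈ O}` of unary predicates. -/
def langP (O : Type) : Language := ⟨fun _ => Empty, PredSymb O⟩

/-- A single binary relation symbol (for graphs). -/
inductive GrSymb : ℕ → Type
  | adj : GrSymb 2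

/-- The language of graphs: one binary relation. -/
def langGr : Language := ⟨fun _ => Empty, GrSymb⟩

instance : langGr.IsRelational := fun _ => inferInstanceAs (IsEmpty Empty)

section Constructions

variable (O : Type) [LinearOrder O]

/-- Interpretation of a relational language `L1` on the disjoint union `Σₗ i, M i`,
where each relation is computed fiberwise (and fails on tuples meeting several fibers). -/
def fiberStructure (L1 : Language) [L1.IsRelational] (M : O → Type)
    [∀ i, L1.Structure (M i)] : L1.Structure (Σₗ i, M i) where
  funMap := fun f _ => isEmptyElim f
  RelMap := fun {n} r v =>
    ∃ (i : O) (w : Fin n → M i), (∀ k, v k = toLex ⟨i, w k⟩) ∧ Structure.RelMap r w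

/-- Interpretation of a relational language `L2` on the disjoint union `Σₗ i, M i` via the
projection to the index structure `O`. -/
def projStructure (L2 : Language) [L2.IsRelational] [L2.Structure O] (M : O → Type) :
    L2.Structure (Σₗ i, M i) where
  funMap := fun f _ => isEmptyElim f
  RelMap := fun {n} r v => Structure.RelMap r fun k => (ofLex (v k)).1

/-- Interpretation of `E` on `Σₗ i, M i`: the equivalence relation whose classes are the
fibers `M i`. -/
def eqClassStructure (M : O → Type) : langE.Structure (Σₗ i, M i) where
  funMap := fun f _ => Empty.elim f
  RelMap := fun {n} r v =>
    match n, r, v with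
    | _, EqSymb.E, v => (ofLex (v 0)).1 = (ofLex (v 1)).1

/-- Interpretation of the predicates `P i` on `Σₗ i, M i`: `P i` names the fiber `M i`. -/
def predStructure (M : O → Type) : (langP O).Structure (Σₗ i, M i) where
  funMap := fun f _ => Empty.elim f
  RelMap := fun {n} r v =>
    match n, r, v with
    | _, PredSymb.P i, v => (ofLex (v 0)).1 = i

/-- The language of `U_{i ∈ O}(M_i)`: the (common) language of the `M_i`, the order `<`,
and the unary predicates `P_i`. -/
def langU (L1 : Language) (O : Type) : Language := (L1.sum Language.order).sum (langP O)

/-- The structure `U_{i ∈ O}(M_i)` on the disjoint union `Σₗ i, M i`: relations of `L1` are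
computed fiberwise, `<` is the lexicographic order (fibers are convex, ordered by `O`), and
`P i` names the fiber `M i`. -/
instance uStructure (L1 : Language) [L1.IsRelational] (M : O → Type)
    [∀ i, L1.Structure (M i)] [∀ i, LinearOrder (M i)] :
    (langU L1 O).Structure (Σₗ i, M i) :=
  letI := fiberStructure O L1 M
  letI := predStructure O M
  inferInstanceAs (((L1.sum Language.order).sum (langP O)).Structure (Σₗ i, M i))

/-- The language `L1 ∪ {<} ∪ {E}` (the reduct language of a semi-direct product, and the
language of `O(M_i | i ∈ I)` when the index structure is a pure linear order). -/
def langRed (L1 : Language) : Language := (L1.sum Language.order).sum langE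

/-- The `L1 ∪ {<} ∪ {E}`-structure on `Σₗ i, M i`: relations of `L1` fiberwise, `<` the
lexicographic order, `E` the equivalence relation whose classes are the fibers.  For a pure
linear order index this is the structure `O(M_i | i ∈ O)`. -/
instance redStructure (L1 : Language) [L1.IsRelational] (M : O → Type)
    [∀ i, L1.Structure (M i)] [∀ i, LinearOrder (M i)] :
    (langRed L1).Structure (Σₗ i, M i) :=
  letI := fiberStructure O L1 M
  letI := eqClassStructure O M
  inferInstanceAs (((L1.sum Language.order).sum langE).Structure (Σₗ i, M i))

/-- The language `L2 ∪ L1 ∪ {E}` (with the shared order `<`) of a semi-direct product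
structure. -/
def langSD (L1 L2 : Language) : Language := (langRed L1).sum L2

/-- The semi-direct product structure `𝕀 = I-script_{i ∈ I}(M_i)` on `Σₗ i, M i`:
relations of `L1` fiberwise, `<` the lexicographic order, `E` the fiber equivalence
relation, and relations of `L2` computed from the index structure via the projection. -/
instance sdStructure (L2 : Language) [L2.IsRelational] [L2.Structure O]
    (L1 : Language) [L1.IsRelational] (M : O → Type)
    [∀ i, L1.Structure (M i)] [∀ i, LinearOrder (M i)] :
    (langSD L1 L2).Structure (Σₗ i, M i) :=
  letI := projStructure O L2 M
  inferInstanceAs (((langRed L1).sum L2).Structure (Σₗ i, M i))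

end Constructions

/-- The underlying set of the "underlying graph" `gr(ā)` of a tuple from a semi-direct
product structure: the set of indices whose fiber meets the tuple. -/
def grSet {O : Type} {M : O → Type} {n : ℕ} (a : Fin n → (Σₗ i, M i)) : Set O :=
  {t | ∃ k, (ofLex (a k)).1 = t}

/-- The full language of ordered graphs: one binary relation and the order. -/
def langOG : Language := langGr.sum Language.order

/-- A finite or countable `langOG`-structure is an ordered graph when the binary relation is
irreflexive and symmetric and the order symbol is interpreted as a linear order. -/
def IsOrderedGraph (N : Type*) [langOG.Structure N] : Prop :=
  (∀ x : N, ¬ Structure.RelMap (L := langOG) (Sum.inl GrSymb.adj) ![x, x]) ∧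
  (∀ x y : N, Structure.RelMap (L := langOG) (Sum.inl GrSymb.adj) ![x, y] →
    Structure.RelMap (L := langOG) (Sum.inl GrSymb.adj) ![y, x]) ∧
  IsLinearOrder N (fun a b =>
    Structure.RelMap (L := langOG) (Sum.inr Language.orderRel.le) ![a, b])

/-- A random ordered graph: a countable structure that is a Fraïssé limit of the class of
finite ordered graphs. -/
def IsRandomOrderedGraph (G : Type) [langGr.Structure G] [LinearOrder G] [Countable G] : Prop :=
  letI : langOG.Structure G := inferInstanceAs ((langGr.sum Language.order).Structure G)
  haveI : ∀ l, IsEmpty (langOG.Functions l) := fun _ => inferInstanceAs (IsEmpty (Empty ⊕ Empty))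
  IsFraisseLimit {N : CategoryTheory.Bundled langOG.Structure | Finite N ∧ IsOrderedGraph N} G

end SRPaper

namespace SRPaper
section Statement9Proof

set_option linter.unusedSectionVars false

attribute [local instance] FirstOrder.Language.orderStructure

instance (O : Type) : (langP O).IsRelational := fun _ => inferInstanceAs (IsEmpty Empty)

instance langE.isRelational : langE.IsRelational := fun _ => inferInstanceAs (IsEmpty Empty)

instance langU.isRelational (L1 : Language) [L1.IsRelational] (O : Type) :
    (langU L1 O).IsRelational :=
  inferInstanceAs ((L1.sum Language.order).sum (langP O)).IsRelational

section Generic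

variable {L : Language} {W : Type*} [L.Structure W]

/-- In a relational language, any set is a substructure. -/
def ofSet [L.IsRelational] (s : Set W) : L.Substructure W :=
  ⟨s, fun f => isEmptyElim f⟩

@[simp] lemma mem_ofSet [L.IsRelational] {s : Set W} {x : W} :
    x ∈ ofSet (L := L) s ↔ x ∈ s := Iff.rfl

@[simp] lemma coe_ofSet [L.IsRelational] {s : Set W} :
    ((ofSet (L := L) s : L.Substructure W) : Set W) = s := rfl

/-- An equality of substructures induces an isomorphism. -/
def equivOfEq {s t : L.Substructure W} (h : s = t) : s ≃[L] t := by
  subst h; exact FirstOrder.Language.Equiv.refl L s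

@[simp] lemma equivOfEq_coe {s t : L.Substructure W} (h : s = t) (x : s) :
    ((equivOfEq h x : t) : W) = x := by subst h; rfl

/-- Build an equivalence in a relational language from an `Equiv` preserving relations. -/
def mkEquiv [L.IsRelational] {X Y : Type*} [L.Structure X] [L.Structure Y] (e : X ≃ Y)
    (h : ∀ {n} (r : L.Relations n) (v : Fin n → X),
      Structure.RelMap r (e ∘ v) ↔ Structure.RelMap r v) : X ≃[L] Y where
  toEquiv := e
  map_fun' := fun f => isEmptyElim f
  map_rel' := fun r v => h r v

@[simp] lemma mkEquiv_apply [L.IsRelational] {X Y : Type*} [L.Structure X] [L.Structure Y]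
    (e : X ≃ Y)
    (h : ∀ {n} (r : L.Relations n) (v : Fin n → X),
      Structure.RelMap r (e ∘ v) ↔ Structure.RelMap r v)
    (x : X) : mkEquiv e h x = e x := rfl

/-- The union of two substructures in a relational language. -/
def unionS [L.IsRelational] (s t : L.Substructure W) : L.Substructure W :=
  ofSet (↑s ∪ ↑t)

lemma mem_unionS [L.IsRelational] {s t : L.Substructure W} {x : W} :
    x ∈ unionS s t ↔ x ∈ s ∨ x ∈ t := Iff.rfl

lemma unionS_le [L.IsRelational] {s t u : L.Substructure W} (hs : s ≤ u) (ht : t ≤ u) :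
    unionS s t ≤ u := by
  intro x hx
  rcases hx with hx | hx
  · exact hs hx
  · exact ht hx

lemma left_le_unionS [L.IsRelational] {s t : L.Substructure W} : s ≤ unionS s t :=
  fun _ hx => Or.inl hx

lemma right_le_unionS [L.IsRelational] {s t : L.Substructure W} : t ≤ unionS s t :=
  fun _ hx => Or.inr hx

/-- Internal Ramsey property for a pair of substructures. -/
def IntRam (L : Language) (W : Type*) [L.Structure W] (a b : L.Substructure W) (k : ℕ) : Prop :=
  ∃ c : L.Substructure W, (c : Set W).Finite ∧
    ∀ col : L.Substructure W → Fin k,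
      ∃ b' : L.Substructure W, b' ≤ c ∧ Nonempty (b ≃[L] b') ∧
        ∀ s₁ s₂ : L.Substructure W, s₁ ≤ b' → s₂ ≤ b' →
          Nonempty (a ≃[L] s₁) → Nonempty (a ≃[L] s₂) → col s₁ = col s₂


lemma map_comap_eq_of_le_range {L : Language} {X Y : Type*} [L.Structure X] [L.Structure Y]
    {f : X →[L] Y} {s : L.Substructure Y} (hs : s ≤ f.range) :
    (s.comap f).map f = s := by
  ext x
  simp only [Substructure.mem_map, Substructure.mem_comap]
  constructor
  · rintro ⟨y, hy, rfl⟩; exact hy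
  · intro hx
    obtain ⟨y, rfl⟩ := Hom.mem_range.1 (hs hx)
    exact ⟨y, hx, rfl⟩

lemma intRam_of_ramseyClass {L : Language} [L.IsRelational] {W : Type} [L.Structure W]
    (h : RamseyClass L (L.age W)) (a b : L.Substructure W)
    (ha : (a : Set W).Finite) (hb : (b : Set W).Finite) (k : ℕ) (hk : 1 ≤ k) :
    IntRam L W a b k := by
  haveI : Finite a := ha.to_subtype
  haveI : Finite b := hb.to_subtype
  obtain ⟨C, ⟨hCfg, ⟨e⟩⟩, hC⟩ := h (Bundled.of a) (Bundled.of b)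
    ⟨Structure.FG.of_finite (M := ↥a), ⟨a.subtype⟩⟩ ⟨Structure.FG.of_finite (M := ↥b), ⟨b.subtype⟩⟩ k hk
  haveI : Finite C := hCfg.finite
  refine ⟨e.toHom.range, ?_, ?_⟩
  · rw [Hom.range_coe]
    exact Set.finite_range _
  · intro col
    obtain ⟨B', ⟨eB⟩, hconst⟩ := hC fun s => col (s.map e.toHom)
    refine ⟨B'.map e.toHom, ?_, ⟨(e.substructureEquivMap B').comp eB⟩, ?_⟩
    · rw [Hom.range_eq_map e.toHom]
      exact Substructure.monotone_map le_top
    · intro s₁ s₂ hs₁ hs₂ ⟨e₁⟩ ⟨e₂⟩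
      have key : ∀ (s : L.Substructure W), s ≤ B'.map e.toHom → (a ≃[L] s) →
          ∃ s' : L.Substructure C, s' ≤ B' ∧ Nonempty (a ≃[L] s') ∧
            s'.map e.toHom = s := by
        intro s hs es
        have hsr : s ≤ e.toHom.range := le_trans hs (by
          rw [Hom.range_eq_map e.toHom]
          exact Substructure.monotone_map le_top)
        refine ⟨s.comap e.toHom, ?_, ?_, map_comap_eq_of_le_range hsr⟩
        · intro x hx
          have : e x ∈ B'.map e.toHom := hs (Substructure.mem_comap.1 hx)
          obtain ⟨y, hy, hxy⟩ := Substructure.mem_map.1 this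
          rwa [← e.injective hxy]
        · exact ⟨((e.substructureEquivMap (s.comap e.toHom)).symm.comp
            (equivOfEq (map_comap_eq_of_le_range hsr)).symm).comp es⟩
      obtain ⟨s₁', hs₁', i₁, hm₁⟩ := key s₁ hs₁ e₁
      obtain ⟨s₂', hs₂', i₂, hm₂⟩ := key s₂ hs₂ e₂
      calc col s₁ = col (s₁'.map e.toHom) := by rw [hm₁]
        _ = col (s₂'.map e.toHom) := hconst s₁' s₂' hs₁' hs₂' i₁ i₂
        _ = col s₂ := by rw [hm₂]

end Generic


section Sigma

variable {O : Type} [LinearOrder O] {L1 : Language} [L1.IsRelational] {M : O → Type}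
  [∀ i, L1.Structure (M i)] [∀ i, LinearOrder (M i)]

/-- The fiber index of an element of the disjoint union. -/
def fib (x : Σₗ i, M i) : O := (ofLex x).1

/-- The inclusion of a fiber into the disjoint union. -/
def liftM (i : O) (x : M i) : Σₗ j, M j := toLex ⟨i, x⟩

@[simp] lemma fib_liftM (i : O) (x : M i) : fib (M := M) (liftM i x) = i := rfl

lemma liftM_injective (i : O) : Function.Injective (liftM (M := M) i) :=
  fun _ _ h => sigma_mk_injective h

/-- Extract the fiber component of an element whose fiber is known. -/
def getFib (x : Σₗ i, M i) (i : O) (h : fib x = i) : M i := h ▸ (ofLex x).2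

lemma liftM_getFib (x : Σₗ i, M i) (i : O) (h : fib x = i) : liftM i (getFib x i h) = x := by
  subst h; rfl

lemma getFib_liftM (i : O) (x : M i) (h : fib (M := M) (liftM i x) = i) :
    getFib (liftM i x) i h = x := rfl

lemma liftM_le_liftM_same {i : O} {x y : M i} : liftM i x ≤ liftM i y ↔ x ≤ y := by
  rw [Sigma.Lex.le_def]
  constructor
  · rintro (h | ⟨h, h2⟩)
    · exact absurd h (lt_irrefl i)
    · exact h2
  · intro h; exact Or.inr ⟨rfl, h⟩

lemma liftM_le_liftM_ne {i j : O} (hij : i ≠ j) {x : M i} {y : M j} :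
    liftM i x ≤ liftM j y ↔ i < j := by
  rw [Sigma.Lex.le_def]
  constructor
  · rintro (h | ⟨h, _⟩)
    · exact h
    · exact absurd h hij
  · exact Or.inl

/-- The part of a substructure of the disjoint union in the fiber `M i`. -/
def part (s : (langU L1 O).Substructure (Σₗ i, M i)) (i : O) :
    (L1.sum Language.order).Substructure (M i) :=
  ofSet {x | liftM i x ∈ s}

@[simp] lemma mem_part {s : (langU L1 O).Substructure (Σₗ i, M i)} {i : O} {x : M i} :
    x ∈ part s i ↔ liftM i x ∈ s := Iff.rfl

/-- The restriction of a substructure of the disjoint union to a set of fibers. -/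
def restr (s : (langU L1 O).Substructure (Σₗ i, M i)) (T : Set O) :
    (langU L1 O).Substructure (Σₗ i, M i) :=
  ofSet {x | x ∈ s ∧ fib x ∈ T}

@[simp] lemma mem_restr {s : (langU L1 O).Substructure (Σₗ i, M i)} {T : Set O}
    {x : Σₗ i, M i} : x ∈ restr s T ↔ x ∈ s ∧ fib x ∈ T := Iff.rfl

/-- The lift of a substructure of a fiber to the disjoint union. -/
def liftS (i : O) (u : (L1.sum Language.order).Substructure (M i)) :
    (langU L1 O).Substructure (Σₗ i, M i) :=
  ofSet (liftM i '' u)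

@[simp] lemma mem_liftS {i : O} {u : (L1.sum Language.order).Substructure (M i)}
    {x : Σₗ i, M i} : x ∈ liftS i u ↔ ∃ y ∈ u, liftM i y = x := Iff.rfl

/-- The support: the set of fibers met by a substructure of the disjoint union. -/
def supp (s : (langU L1 O).Substructure (Σₗ i, M i)) : Set O :=
  {i | ∃ x : M i, liftM i x ∈ s}

lemma fib_mem_supp {s : (langU L1 O).Substructure (Σₗ i, M i)} {x : Σₗ i, M i}
    (hx : x ∈ s) : fib x ∈ supp s :=
  ⟨(ofLex x).2, hx⟩

lemma supp_finite {s : (langU L1 O).Substructure (Σₗ i, M i)}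
    (hs : (s : Set (Σₗ i, M i)).Finite) :
    (supp s).Finite := by
  refine (hs.image fib).subset ?_
  rintro i ⟨x, hx⟩
  exact ⟨liftM i x, hx, rfl⟩

lemma relMap_rel {n : ℕ} (r : L1.Relations n) (v : Fin n → Σₗ i, M i) :
    Structure.RelMap (L := langU L1 O) (Sum.inl (Sum.inl r)) v ↔
      ∃ (i : O) (w : Fin n → M i), (∀ k, v k = liftM i (w k)) ∧ Structure.RelMap r w :=
  Iff.rfl

lemma relMap_le (v : Fin 2 → Σₗ i, M i) :
    Structure.RelMap (L := langU L1 O) (Sum.inl (Sum.inr Language.orderRel.le)) v ↔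
      v 0 ≤ v 1 :=
  Iff.rfl

lemma relMap_P (i : O) (v : Fin 1 → Σₗ i, M i) :
    Structure.RelMap (L := langU L1 O) (Sum.inr (PredSymb.P i)) v ↔ fib (v 0) = i :=
  Iff.rfl

lemma relMap_le_fiber (i : O) (v : Fin 2 → M i) :
    Structure.RelMap (L := L1.sum Language.order) (Sum.inr Language.orderRel.le) v ↔
      v 0 ≤ v 1 :=
  Iff.rfl

lemma relMap_rel_fiber (i : O) {n : ℕ} (r : L1.Relations n) (v : Fin n → M i) :
    Structure.RelMap (L := L1.sum Language.order) (Sum.inl r) v ↔ Structure.RelMap r v :=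
  Iff.rfl

end Sigma

section Sigma2

variable {O : Type} [LinearOrder O] {L1 : Language} [L1.IsRelational] {M : O → Type}
  [∀ i, L1.Structure (M i)] [∀ i, LinearOrder (M i)]

lemma exists_liftM_iff {n : ℕ} (hn : n ≠ 0) (r : L1.Relations n) (i : O) (y : Fin n → M i) :
    (∃ (j : O) (w : Fin n → M j), (∀ k, liftM i (y k) = liftM j (w k)) ∧ Structure.RelMap r w)
      ↔ Structure.RelMap r y := by
  constructor
  · rintro ⟨j, w, hw, hr⟩
    obtain ⟨k0⟩ : Nonempty (Fin n) := ⟨⟨0, Nat.pos_of_ne_zero hn⟩⟩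
    have hij : i = j := congrArg fib (hw k0)
    subst hij
    have hyw : y = w := funext fun k => liftM_injective i (hw k)
    rwa [hyw]
  · intro h
    exact ⟨i, y, fun _ => rfl, h⟩

lemma le_iff_of_fib_ne {x y : Σₗ i, M i} (h : fib x ≠ fib y) : x ≤ y ↔ fib x < fib y := by
  rw [Sigma.Lex.le_def]
  constructor
  · rintro (h1 | ⟨h1, _⟩)
    · exact h1
    · exact absurd h1 h
  · exact Or.inl

lemma fib_equiv {s t : (langU L1 O).Substructure (Σₗ i, M i)} (e : s ≃[langU L1 O] t)
    (x : s) : fib ((e x : t) : Σₗ i, M i) = fib (x : Σₗ i, M i) :=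
  (e.map_rel' (Sum.inr (PredSymb.P (fib (x : Σₗ i, M i)))) (fun _ => x)).2 rfl

variable {s t : (langU L1 O).Substructure (Σₗ i, M i)}

/-- The underlying map of the restriction of an equivalence to a fiber. -/
def partMap (e : s ≃[langU L1 O] t) (i : O) (x : part s i) : part t i :=
  ⟨getFib ((e ⟨liftM i ↑x, x.2⟩ : t) : Σₗ i, M i) i (by rw [fib_equiv]; rfl), by
    rw [mem_part, liftM_getFib]
    exact (e ⟨liftM i ↑x, x.2⟩).2⟩

lemma liftM_partMap (e : s ≃[langU L1 O] t) (i : O) (x : part s i) :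
    liftM i (↑(partMap e i x) : M i) = ((e ⟨liftM i ↑x, x.2⟩ : t) : Σₗ i, M i) :=
  liftM_getFib _ _ _

/-- An isomorphism of substructures of the disjoint union restricts to each fiber. -/
def partEquiv (e : s ≃[langU L1 O] t) (i : O) :
    part s i ≃[L1.sum Language.order] part t i := by
  refine mkEquiv ⟨partMap e i, partMap e.symm i, ?_, ?_⟩ ?_
  · intro x
    apply Subtype.ext
    apply liftM_injective i
    rw [liftM_partMap]
    have h1 : (⟨liftM i ↑(partMap e i x), (partMap e i x).2⟩ : t) = e ⟨liftM i ↑x, x.2⟩ :=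
      Subtype.ext (liftM_partMap e i x)
    rw [h1, Language.Equiv.symm_apply_apply]
  · intro x
    apply Subtype.ext
    apply liftM_injective i
    rw [liftM_partMap]
    have h1 : (⟨liftM i ↑(partMap e.symm i x), (partMap e.symm i x).2⟩ : s)
        = e.symm ⟨liftM i ↑x, x.2⟩ :=
      Subtype.ext (liftM_partMap e.symm i x)
    rw [h1, Language.Equiv.apply_symm_apply]
  · intro n r v
    match n, r with
    | n, Sum.inl r =>
      rcases Nat.eq_zero_or_pos n with rfl | hn
      · have hv : (fun k => ((partMap e i (v k) : part t i) : M i)) = fun k => ((v k : part s i) : M i) :=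
          funext fun k => k.elim0
        show Structure.RelMap r (fun k => ((partMap e i (v k) : part t i) : M i))
          ↔ Structure.RelMap r (fun k => ((v k : part s i) : M i))
        rw [hv]
      · have amb := e.map_rel' (Sum.inl (Sum.inl r)) (fun k => ⟨liftM i ↑(v k), (v k).2⟩)
        have amb2 : (∃ (j : O) (w : Fin n → M j),
            (∀ k, ((e ⟨liftM i ↑(v k), (v k).2⟩ : t) : Σₗ i, M i) = liftM j (w k))
              ∧ Structure.RelMap r w)
            ↔ (∃ (j : O) (w : Fin n → M j),
            (∀ k, liftM i (↑(v k) : M i) = liftM j (w k)) ∧ Structure.RelMap r w) := amb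
        simp only [← liftM_partMap e i] at amb2
        exact ((exists_liftM_iff (Nat.pos_iff_ne_zero.1 hn) r i
          (fun k => (↑(partMap e i (v k)) : M i))).symm.trans
          (amb2.trans (exists_liftM_iff (Nat.pos_iff_ne_zero.1 hn) r i
            (fun k => (↑(v k) : M i)))))
    | 2, Sum.inr Language.orderRel.le =>
      show (↑(partMap e i (v 0)) : M i) ≤ ↑(partMap e i (v 1))
        ↔ (↑(v 0) : M i) ≤ ↑(v 1)
      rw [← liftM_le_liftM_same (i := i) (M := M), ← liftM_le_liftM_same (i := i) (M := M),
        liftM_partMap, liftM_partMap]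
      exact e.map_rel' (Sum.inl (Sum.inr Language.orderRel.le))
        ![⟨liftM i ↑(v 0), (v 0).2⟩, ⟨liftM i ↑(v 1), (v 1).2⟩]

end Sigma2

section Sigma3

variable {O : Type} [LinearOrder O] {L1 : Language} [L1.IsRelational] {M : O → Type}
  [∀ i, L1.Structure (M i)] [∀ i, LinearOrder (M i)]
  {s t : (langU L1 O).Substructure (Σₗ i, M i)}

/-- The underlying map of the gluing of fiberwise isomorphisms. -/
def glueMap (g : ∀ i, part s i ≃[L1.sum Language.order] part t i) (x : s) : t :=
  ⟨liftM (fib (x : Σₗ i, M i)) ↑(g (fib (x : Σₗ i, M i)) ⟨(ofLex (x : Σₗ i, M i)).2, x.2⟩),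
    (g (fib (x : Σₗ i, M i)) ⟨(ofLex (x : Σₗ i, M i)).2, x.2⟩).2⟩

lemma fib_glueMap (g : ∀ i, part s i ≃[L1.sum Language.order] part t i) (x : s) :
    fib ((glueMap g x : t) : Σₗ i, M i) = fib (x : Σₗ i, M i) := rfl

lemma glueMap_eq (g : ∀ i, part s i ≃[L1.sum Language.order] part t i) (x : s) (i : O)
    (h : fib (x : Σₗ i, M i) = i) (hm : getFib (x : Σₗ i, M i) i h ∈ part s i) :
    ((glueMap g x : t) : Σₗ i, M i) = liftM i ↑(g i ⟨getFib (x : Σₗ i, M i) i h, hm⟩) := by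
  subst h; rfl

lemma mem_part_of_fib {x : Σₗ i, M i} (hx : x ∈ s) (i : O) (h : fib x = i) :
    getFib x i h ∈ part s i := by
  rw [mem_part, liftM_getFib]; exact hx

/-- Gluing fiberwise isomorphisms into an isomorphism of substructures. -/
def glueEquiv (g : ∀ i, part s i ≃[L1.sum Language.order] part t i) :
    s ≃[langU L1 O] t := by
  refine mkEquiv ⟨glueMap g, glueMap (fun i => (g i).symm), ?_, ?_⟩ ?_
  · intro x
    apply Subtype.ext
    show liftM (fib (x : Σₗ i, M i))
        ↑((g (fib (x : Σₗ i, M i))).symm (g (fib (x : Σₗ i, M i)) ⟨(ofLex (x : Σₗ i, M i)).2, x.2⟩))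
      = (x : Σₗ i, M i)
    rw [Language.Equiv.symm_apply_apply]
    rfl
  · intro x
    apply Subtype.ext
    show liftM (fib (x : Σₗ i, M i))
        ↑((g (fib (x : Σₗ i, M i)))
          ((g (fib (x : Σₗ i, M i))).symm ⟨(ofLex (x : Σₗ i, M i)).2, x.2⟩))
      = (x : Σₗ i, M i)
    rw [Language.Equiv.apply_symm_apply]
    rfl
  · intro n r v
    match n, r with
    | n, Sum.inl (Sum.inl r) =>
      show (∃ (j : O) (w : Fin n → M j),
          (∀ k, ((glueMap g (v k) : t) : Σₗ i, M i) = liftM j (w k)) ∧ Structure.RelMap r w)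
        ↔ (∃ (j : O) (w : Fin n → M j),
          (∀ k, ((v k : s) : Σₗ i, M i) = liftM j (w k)) ∧ Structure.RelMap r w)
      constructor
      · rintro ⟨j, w, hw, hr⟩
        have hf : ∀ k, fib ((v k : s) : Σₗ i, M i) = j := fun k =>
          (fib_glueMap g (v k)).symm.trans (congrArg fib (hw k))
        set u : Fin n → part s j := fun k =>
          ⟨getFib ((v k : s) : Σₗ i, M i) j (hf k), mem_part_of_fib (v k).2 j (hf k)⟩ with hu
        have hgv : ∀ k, ((glueMap g (v k) : t) : Σₗ i, M i) = liftM j ↑(g j (u k)) := fun k =>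
          glueMap_eq g (v k) j (hf k) _
        have hwu : ∀ k, w k = ↑(g j (u k)) := fun k =>
          liftM_injective j ((hw k).symm.trans (hgv k))
        have hr2 : Structure.RelMap r (fun k => (↑(g j (u k)) : M j)) := by
          have : w = fun k => (↑(g j (u k)) : M j) := funext hwu
          rwa [this] at hr
        have hr3 : Structure.RelMap r (fun k => (↑(u k) : M j)) :=
          ((g j).map_rel' (Sum.inl r) u).1 hr2
        exact ⟨j, fun k => ↑(u k), fun k => (liftM_getFib _ _ _).symm, hr3⟩
      · rintro ⟨j, w, hw, hr⟩
        have hf : ∀ k, fib ((v k : s) : Σₗ i, M i) = j := fun k => congrArg fib (hw k)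
        set u : Fin n → part s j := fun k =>
          ⟨getFib ((v k : s) : Σₗ i, M i) j (hf k), mem_part_of_fib (v k).2 j (hf k)⟩ with hu
        have huw : ∀ k, (↑(u k) : M j) = w k := fun k =>
          liftM_injective j ((liftM_getFib _ _ _).trans (hw k))
        have hr2 : Structure.RelMap r (fun k => (↑(u k) : M j)) := by
          have : (fun k => (↑(u k) : M j)) = w := funext huw
          rwa [this]
        have hr3 : Structure.RelMap r (fun k => (↑(g j (u k)) : M j)) :=
          ((g j).map_rel' (Sum.inl r) u).2 hr2
        exact ⟨j, fun k => ↑(g j (u k)), fun k => glueMap_eq g (v k) j (hf k) _, hr3⟩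
    | 2, Sum.inl (Sum.inr Language.orderRel.le) =>
      show ((glueMap g (v 0) : t) : Σₗ i, M i) ≤ ((glueMap g (v 1) : t) : Σₗ i, M i)
        ↔ ((v 0 : s) : Σₗ i, M i) ≤ ((v 1 : s) : Σₗ i, M i)
      by_cases h : fib ((v 0 : s) : Σₗ i, M i) = fib ((v 1 : s) : Σₗ i, M i)
      · set i0 := fib ((v 0 : s) : Σₗ i, M i) with hi0
        have h1 : fib ((v 1 : s) : Σₗ i, M i) = i0 := h.symm
        have hm0 := mem_part_of_fib (v 0).2 i0 rfl
        have hm1 := mem_part_of_fib (v 1).2 i0 h1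
        rw [glueMap_eq g (v 0) i0 rfl hm0, glueMap_eq g (v 1) i0 h1 hm1,
          liftM_le_liftM_same]
        conv_rhs => rw [← liftM_getFib ((v 0 : s) : Σₗ i, M i) i0 rfl,
          ← liftM_getFib ((v 1 : s) : Σₗ i, M i) i0 h1, liftM_le_liftM_same]
        exact (g i0).map_rel' (Sum.inr Language.orderRel.le)
          ![⟨getFib _ i0 rfl, hm0⟩, ⟨getFib _ i0 h1, hm1⟩]
      · have h2 : fib ((glueMap g (v 0) : t) : Σₗ i, M i)
            ≠ fib ((glueMap g (v 1) : t) : Σₗ i, M i) := by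
          rw [fib_glueMap, fib_glueMap]; exact h
        rw [le_iff_of_fib_ne h, le_iff_of_fib_ne h2, fib_glueMap, fib_glueMap]
    | 1, Sum.inr (PredSymb.P j) =>
      show fib ((glueMap g (v 0) : t) : Σₗ i, M i) = j ↔ fib ((v 0 : s) : Σₗ i, M i) = j
      rw [fib_glueMap]

end Sigma3

section Sigma4

variable {O : Type} [LinearOrder O] {L1 : Language} [L1.IsRelational] {M : O → Type}
  [∀ i, L1.Structure (M i)] [∀ i, LinearOrder (M i)]
  {s t : (langU L1 O).Substructure (Σₗ i, M i)}

lemma part_restr_of_mem {T : Set O} {i : O} (h : i ∈ T) : part (restr s T) i = part s i := by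
  ext x
  simp only [mem_part, mem_restr, fib_liftM]
  exact and_iff_left h

lemma part_restr_of_not_mem {T : Set O} {i : O} (h : i ∉ T) :
    part (restr s T) i = ofSet (∅ : Set (M i)) := by
  ext x
  simp only [mem_part, mem_restr, fib_liftM, mem_ofSet, Set.mem_empty_iff_false, iff_false]
  rintro ⟨-, hT⟩
  exact h hT

open scoped Classical in
/-- An isomorphism of substructures restricts to sets of fibers. -/
noncomputable def restrEquiv (e : s ≃[langU L1 O] t) (T : Set O) :
    restr s T ≃[langU L1 O] restr t T :=
  glueEquiv (fun i =>
    if h : i ∈ T then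
      (equivOfEq (part_restr_of_mem (s := t) h)).symm.comp
        ((partEquiv e i).comp (equivOfEq (part_restr_of_mem h)))
    else
      equivOfEq ((part_restr_of_not_mem h).trans (part_restr_of_not_mem (s := t) h).symm))

lemma mem_supp_iff {i : O} : i ∈ supp s ↔ ∃ x : M i, x ∈ part s i := Iff.rfl

lemma supp_eq_of_equiv (e : s ≃[langU L1 O] t) : supp s = supp t := by
  ext i
  rw [mem_supp_iff, mem_supp_iff]
  constructor
  · rintro ⟨x, hx⟩
    exact ⟨↑(partEquiv e i ⟨x, hx⟩), (partEquiv e i ⟨x, hx⟩).2⟩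
  · rintro ⟨x, hx⟩
    exact ⟨↑((partEquiv e i).symm ⟨x, hx⟩), ((partEquiv e i).symm ⟨x, hx⟩).2⟩

lemma restr_le {T : Set O} : restr s T ≤ s := fun _ hx => hx.1

lemma restr_mono {T : Set O} (h : s ≤ t) : restr s T ≤ restr t T :=
  fun _ hx => ⟨h hx.1, hx.2⟩

lemma part_mono {i : O} (h : s ≤ t) : part s i ≤ part t i := fun _ hx => h hx

lemma liftS_mono {i : O} {u v : (L1.sum Language.order).Substructure (M i)} (h : u ≤ v) :
    liftS i u ≤ liftS i v := by
  rintro x ⟨y, hy, rfl⟩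
  exact ⟨y, h hy, rfl⟩

lemma decomp_eq (s : (langU L1 O).Substructure (Σₗ i, M i)) (i : O) :
    unionS (restr s {i}ᶜ) (liftS i (part s i)) = s := by
  ext x
  simp only [mem_unionS, mem_restr, mem_liftS, mem_part, Set.mem_compl_iff,
    Set.mem_singleton_iff]
  constructor
  · rintro (⟨hx, -⟩ | ⟨y, hy, rfl⟩)
    · exact hx
    · exact hy
  · intro hx
    by_cases h : fib x = i
    · exact Or.inr ⟨getFib x i h, by rwa [liftM_getFib], liftM_getFib x i h⟩
    · exact Or.inl ⟨hx, h⟩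

lemma part_unionS_liftS_ne {i j : O} (h : j ≠ i)
    {u : (L1.sum Language.order).Substructure (M i)} :
    part (unionS s (liftS i u)) j = part s j := by
  ext x
  simp only [mem_part, mem_unionS, mem_liftS]
  constructor
  · rintro (hx | ⟨y, -, hy⟩)
    · exact hx
    · exact absurd (congrArg fib hy) (by simpa using h.symm)
  · exact Or.inl

lemma part_unionS_liftS_self {i : O} (hns : i ∉ supp s)
    {u : (L1.sum Language.order).Substructure (M i)} :
    part (unionS s (liftS i u)) i = u := by
  ext x
  simp only [mem_part, mem_unionS, mem_liftS]
  constructor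
  · rintro (hx | ⟨y, hy, hxy⟩)
    · exact absurd ⟨x, hx⟩ hns
    · rwa [← liftM_injective i hxy]
  · intro hx
    exact Or.inr ⟨x, hx, rfl⟩

lemma restr_unionS_liftS {i : O} (hns : i ∉ supp s)
    {u : (L1.sum Language.order).Substructure (M i)} :
    restr (unionS s (liftS i u)) {i}ᶜ = s := by
  ext x
  simp only [mem_restr, mem_unionS, mem_liftS, Set.mem_compl_iff, Set.mem_singleton_iff]
  constructor
  · rintro ⟨hx | ⟨y, hy, rfl⟩, hfib⟩
    · exact hx
    · exact absurd rfl hfib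
  · intro hx
    refine ⟨Or.inl hx, fun h => hns ?_⟩
    exact ⟨getFib x i h, by rwa [liftM_getFib]⟩

lemma part_le_of_restr_le {i : O} {u : (L1.sum Language.order).Substructure (M i)}
    (h : s ≤ unionS t (liftS i u)) (hns : i ∉ supp t) : part s i ≤ u := by
  intro x hx
  rcases h hx with hx' | ⟨y, hy, hxy⟩
  · exact absurd ⟨x, hx'⟩ hns
  · rwa [← liftM_injective i hxy]

lemma part_finite {i : O} (hs : (s : Set (Σₗ i, M i)).Finite) :
    (part s i : Set (M i)).Finite := by
  have h2 : (liftM i ⁻¹' (s : Set (Σₗ i, M i))).Finite :=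
    Set.Finite.preimage (Set.injOn_of_injective (liftM_injective i)) hs
  exact h2

lemma restr_finite {T : Set O} (hs : (s : Set (Σₗ i, M i)).Finite) :
    (restr s T : Set (Σₗ i, M i)).Finite :=
  hs.subset restr_le

lemma liftS_finite {i : O} {u : (L1.sum Language.order).Substructure (M i)}
    (hu : (u : Set (M i)).Finite) : (liftS i u : Set (Σₗ i, M i)).Finite :=
  hu.image _

lemma unionS_finite (hs : (s : Set (Σₗ i, M i)).Finite)
    (ht : (t : Set (Σₗ i, M i)).Finite) : (unionS s t : Set (Σₗ i, M i)).Finite :=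
  hs.union ht

lemma supp_restr_subset {T : Set O} : supp (restr s T) ⊆ T := by
  rintro i ⟨x, hx, hfib⟩
  simpa using hfib

lemma supp_restr_subset' {T : Set O} : supp (restr s T) ⊆ supp s := by
  rintro i ⟨x, hx, -⟩
  exact ⟨x, hx⟩

lemma carrier_empty_of_supp_empty (h : supp s = ∅) {x : Σₗ i, M i} (hx : x ∈ s) : False := by
  have := fib_mem_supp hx
  rw [h] at this
  exact this

end Sigma4

section Main

variable {O : Type} [LinearOrder O] {L1 : Language} [L1.IsRelational] {M : O → Type}
  [∀ i, L1.Structure (M i)] [∀ i, LinearOrder (M i)]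

lemma key_induction
    (hRP : ∀ i, RamseyClass (L1.sum Language.order) ((L1.sum Language.order).age (M i)))
    (S : Finset O) :
    ∀ a b : (langU L1 O).Substructure (Σₗ i, M i),
      (a : Set (Σₗ i, M i)).Finite → (b : Set (Σₗ i, M i)).Finite →
      supp a ⊆ ↑S → ∀ k : ℕ, 1 ≤ k → IntRam (langU L1 O) (Σₗ i, M i) a b k := by
  classical
  induction S using Finset.induction_on with
  | empty =>
    intro a b ha hb hsupp k hk
    refine ⟨b, hb, fun col => ⟨b, le_refl b, ⟨FirstOrder.Language.Equiv.refl _ _⟩, ?_⟩⟩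
    rintro s₁ s₂ h₁ h₂ ⟨e₁⟩ ⟨e₂⟩
    have hae : supp a = ∅ := Set.subset_empty_iff.1 (by simpa using hsupp)
    have hs : ∀ (sx : (langU L1 O).Substructure (Σₗ i, M i)) (_ : a ≃[langU L1 O] sx)
        (x : Σₗ i, M i), x ∈ sx → False := fun sx e x hx =>
      carrier_empty_of_supp_empty hae (e.symm ⟨x, hx⟩).2
    have h12 : s₁ = s₂ := SetLike.ext fun x =>
      ⟨fun h => absurd h (fun h => hs _ e₁ x h), fun h => absurd h (fun h => hs _ e₂ x h)⟩
    rw [h12]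
  | @insert t S' htS' IH =>
    intro a b ha hb hsupp k hk
    obtain ⟨ct, hctfin, hct⟩ := intRam_of_ramseyClass (hRP t) (part a t) (part b t)
      (part_finite ha) (part_finite hb) k hk
    haveI hctsub : Finite ↥(ct : Set (M t)) := hctfin.to_subtype
    haveI : Finite {u : (L1.sum Language.order).Substructure (M t) // u ≤ ct} := by
      refine Finite.of_injective
        (fun u => ({y : ↥(ct : Set (M t)) | ↑y ∈ u.1} : Set ↥(ct : Set (M t)))) ?_
      rintro ⟨u₁, hu₁⟩ ⟨u₂, hu₂⟩ h
      have h' := Set.ext_iff.1 h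
      refine Subtype.ext (SetLike.ext fun x => ⟨fun hx => ?_, fun hx => ?_⟩)
      · exact h' ⟨x, hu₁ hx⟩ |>.1 hx
      · exact h' ⟨x, hu₂ hx⟩ |>.2 hx
    haveI := Fintype.ofFinite {u : (L1.sum Language.order).Substructure (M t) // u ≤ ct}
    haveI : Fintype ({u : (L1.sum Language.order).Substructure (M t) // u ≤ ct} → Fin k) :=
      Fintype.ofFinite _
    set k' := Fintype.card ({u : (L1.sum Language.order).Substructure (M t) // u ≤ ct} → Fin k)
      with hk'def
    have hk' : 1 ≤ k' := Fintype.card_pos_iff.2 ⟨fun _ => ⟨0, hk⟩⟩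
    have enc := Fintype.equivFin
      ({u : (L1.sum Language.order).Substructure (M t) // u ≤ ct} → Fin k)
    have hsupp' : supp (restr a {t}ᶜ) ⊆ ↑S' := by
      intro i hi
      have h1 : i ∈ supp a := supp_restr_subset' hi
      have h2 : i ≠ t := by simpa using supp_restr_subset hi
      have h3 := hsupp h1
      rw [Finset.coe_insert] at h3
      rcases h3 with h3 | h3
      · exact absurd h3 h2
      · exact h3
    obtain ⟨c', hc'fin, hc'⟩ := IH (restr a {t}ᶜ) (restr b {t}ᶜ) (restr_finite ha)
      (restr_finite hb) hsupp' k' hk'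
    refine ⟨unionS c' (liftS t ct), unionS_finite hc'fin (liftS_finite hctfin), ?_⟩
    intro col
    set F : (langU L1 O).Substructure (Σₗ i, M i) → Fin k' :=
      fun x => enc (fun u => col (unionS x (liftS t ↑u))) with hF
    obtain ⟨b'', hb''le, ⟨e''⟩, hconst''⟩ := hc' F
    have htb'' : t ∉ supp b'' := by
      rw [← supp_eq_of_equiv e'']
      intro h
      exact (by simpa using supp_restr_subset h : t ≠ t) rfl
    set v₀ : Fin k' := if h : ∃ x, x ≤ b'' ∧
        Nonempty (restr a {t}ᶜ ≃[langU L1 O] x) then F h.choose else ⟨0, hk'⟩ with hv₀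
    set g : (L1.sum Language.order).Substructure (M t) → Fin k :=
      fun u => if h : u ≤ ct then enc.symm v₀ ⟨u, h⟩ else ⟨0, hk⟩ with hg
    obtain ⟨bt', hbt'le, ⟨et⟩, hconstt⟩ := hct g
    refine ⟨unionS b'' (liftS t bt'),
      unionS_le (le_trans hb''le left_le_unionS) (le_trans (liftS_mono hbt'le) right_le_unionS),
      ⟨?_⟩, ?_⟩
    · -- b ≃ b'
      refine glueEquiv (fun i => ?_)
      by_cases h : i = t
      · subst h
        exact (equivOfEq (part_unionS_liftS_self htb'').symm).comp et
      · have hmem : i ∈ ({t}ᶜ : Set O) := by simpa using h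
        exact (equivOfEq (part_unionS_liftS_ne h).symm).comp
          ((partEquiv e'' i).comp (equivOfEq (part_restr_of_mem hmem).symm))
    · rintro s₁ s₂ hs₁ hs₂ ⟨e₁⟩ ⟨e₂⟩
      have hrestr_le : ∀ {sx : (langU L1 O).Substructure (Σₗ i, M i)},
          sx ≤ unionS b'' (liftS t bt') → restr sx {t}ᶜ ≤ b'' := by
        intro sx h x hx
        rcases h hx.1 with h1 | h1
        · exact h1
        · obtain ⟨y, hy, rfl⟩ := h1
          exact absurd (show fib (liftM t y) ∈ ({t} : Set O) from rfl) hx.2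
      have hpart_le : ∀ {sx : (langU L1 O).Substructure (Σₗ i, M i)},
          sx ≤ unionS b'' (liftS t bt') → part sx t ≤ bt' := fun h =>
        part_le_of_restr_le h htb''
      have hcol : ∀ (sx : (langU L1 O).Substructure (Σₗ i, M i))
          (hle : sx ≤ unionS b'' (liftS t bt')),
          col sx = enc.symm (F (restr sx {t}ᶜ))
            ⟨part sx t, le_trans (hpart_le hle) hbt'le⟩ := by
        intro sx hle
        rw [hF]
        simp only [Equiv.symm_apply_apply]
        rw [decomp_eq sx t]
      have hexists : ∃ x, x ≤ b'' ∧ Nonempty (restr a {t}ᶜ ≃[langU L1 O] x) :=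
        ⟨restr s₁ {t}ᶜ, hrestr_le hs₁, ⟨restrEquiv e₁ {t}ᶜ⟩⟩
      have hv₀eq : v₀ = F hexists.choose := by rw [hv₀, dif_pos hexists]
      have hx₀ := hexists.choose_spec
      have hF1 : F (restr s₁ {t}ᶜ) = v₀ := by
        rw [hv₀eq]
        exact hconst'' _ _ (hrestr_le hs₁) hx₀.1 ⟨restrEquiv e₁ {t}ᶜ⟩ hx₀.2
      have hF2 : F (restr s₂ {t}ᶜ) = v₀ := by
        rw [hv₀eq]
        exact hconst'' _ _ (hrestr_le hs₂) hx₀.1 ⟨restrEquiv e₂ {t}ᶜ⟩ hx₀.2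
      have hgeq : ∀ (sx : (langU L1 O).Substructure (Σₗ i, M i))
          (hle : sx ≤ unionS b'' (liftS t bt')),
          enc.symm v₀ ⟨part sx t, le_trans (hpart_le hle) hbt'le⟩ = g (part sx t) := by
        intro sx hle
        simp only [hg]
        rw [dif_pos (le_trans (hpart_le hle) hbt'le)]
      calc col s₁ = enc.symm (F (restr s₁ {t}ᶜ)) ⟨part s₁ t, _⟩ := hcol s₁ hs₁
        _ = g (part s₁ t) := by rw [hF1]; exact hgeq s₁ hs₁
        _ = g (part s₂ t) := hconstt (part s₁ t) (part s₂ t) (hpart_le hs₁) (hpart_le hs₂)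
            ⟨partEquiv e₁ t⟩ ⟨partEquiv e₂ t⟩
        _ = enc.symm (F (restr s₂ {t}ᶜ)) ⟨part s₂ t, _⟩ := by rw [hF2]; exact (hgeq s₂ hs₂).symm
        _ = col s₂ := (hcol s₂ hs₂).symm

end Main

section Comap

variable {L : Language} [L.IsRelational] {W : Type*} [L.Structure W]

/-- A substructure contained in `c` is isomorphic to the corresponding substructure of `c`. -/
def comapSubtypeEquiv {c b' : L.Substructure W} (h : b' ≤ c) :
    b' ≃[L] (b'.comap c.subtype.toHom) :=
  mkEquiv
    ⟨fun y => ⟨⟨↑y, h y.2⟩, y.2⟩, fun z => ⟨↑↑z, z.2⟩,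
      fun y => Subtype.ext rfl, fun z => Subtype.ext (Subtype.ext rfl)⟩
    (fun _ _ => Iff.rfl)

end Comap

end Statement9Proof
end SRPaper


attribute [local instance] FirstOrder.Language.orderStructure

open SRPaper in
/-- If each `M_i` has the Ramsey property, then `U_{i ∈ O}(M_i)` has the
Ramsey property. -/
theorem statement9 (O : Type) [LinearOrder O]
    (L1 : Language) [L1.IsRelational] (M : O → Type)
    [∀ i, L1.Structure (M i)] [∀ i, LinearOrder (M i)] [∀ i, Countable (M i)]
    (hRP : ∀ i, RamseyClass (L1.sum Language.order) ((L1.sum Language.order).age (M i))) :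
    RamseyClass (langU L1 O) ((langU L1 O).age (Σₗ i, M i)) := by
  intro A B hA hB k hk
  classical
  obtain ⟨hAfg, ⟨f⟩⟩ := hA
  obtain ⟨hBfg, ⟨g⟩⟩ := hB
  haveI : Finite A := hAfg.finite
  haveI : Finite B := hBfg.finite
  set a := f.toHom.range with hadef
  set b := g.toHom.range with hbdef
  have hafin : (a : Set (Σₗ i, M i)).Finite := by
    rw [hadef, Hom.range_coe]; exact Set.finite_range _
  have hbfin : (b : Set (Σₗ i, M i)).Finite := by
    rw [hbdef, Hom.range_coe]; exact Set.finite_range _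
  have hsuppfin : (supp a).Finite := supp_finite hafin
  obtain ⟨c, hcfin, hcol⟩ := key_induction hRP hsuppfin.toFinset a b hafin hbfin
    (by rw [Set.Finite.coe_toFinset]) k hk
  haveI : Finite ↥c := hcfin.to_subtype
  refine ⟨Bundled.of ↥c, ⟨Structure.FG.of_finite (M := ↥c), ⟨c.subtype⟩⟩, ?_⟩
  intro ct
  obtain ⟨b', hb'c, ⟨eb⟩, hconst⟩ := hcol (fun s => ct (s.comap c.subtype.toHom))
  have hinj : Function.Injective ⇑c.subtype.toHom := c.subtype.injective
  refine ⟨b'.comap c.subtype.toHom, ⟨(comapSubtypeEquiv hb'c).comp (eb.comp g.equivRange)⟩, ?_⟩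
  intro A₁ A₂ h₁ h₂ ⟨i₁⟩ ⟨i₂⟩
  have key : ∀ (X : (langU L1 O).Substructure ↥c), X ≤ b'.comap c.subtype.toHom →
      (A ≃[langU L1 O] X) →
      X.map c.subtype.toHom ≤ b' ∧ Nonempty (a ≃[langU L1 O] (X.map c.subtype.toHom)) := by
    intro X hX iX
    constructor
    · exact le_trans (Substructure.monotone_map hX) Substructure.map_comap_le
    · exact ⟨(c.subtype.substructureEquivMap X).comp (iX.comp f.equivRange.symm)⟩
  obtain ⟨hle₁, hiso₁⟩ := key A₁ h₁ i₁
  obtain ⟨hle₂, hiso₂⟩ := key A₂ h₂ i₂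
  have heq : ∀ X : (langU L1 O).Substructure ↥c,
      (X.map c.subtype.toHom).comap c.subtype.toHom = X := fun X =>
    Substructure.comap_map_eq_of_injective hinj X
  have := hconst (A₁.map c.subtype.toHom) (A₂.map c.subtype.toHom) hle₁ hle₂ hiso₁ hiso₂
  exact (congrArg ct (heq A₁)).symm.trans (this.trans (congrArg ct (heq A₂)))
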